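/- Let $n \ge 2$ be prime and let $A$ be the $n \times n$ rational matrix with $A_{i,i+1} = 1$ for $1 \le i \le n-1$, $A_{n,1} = 1/2$, and all other entries $0$. For $1 \le q \le n-1$, the cokernel of $I - 2\Lambda^q(A)$ acting on $\Lambda^q(\mathbb{Z}^n)$ is isomorphic to $(\mathbb{Z}/(2^{n-q}-1)\mathbb{Z})^{\frac{1}{n}\binom{n}{q}}$. -/

import Mathlib

open ExteriorAlgebra

open Finset
open Fin.NatCast Fin.CommRing
namespace Stmt11Aux

variable (n q : ℕ)

/-- wedge of standard basis vectors indexed by a `q`-subset -/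
noncomputable def wdg (S : {s : Finset (Fin n) // s.card = q}) :
    ExteriorAlgebra ℤ (Fin n → ℤ) :=
  ιMulti ℤ q (fun i => Pi.single (S.1.orderEmbOfFin S.2 i) 1)

/-- dual functional -/
noncomputable def FU (U : {s : Finset (Fin n) // s.card = q}) :
    ExteriorAlgebra ℤ (Fin n → ℤ) →ₗ[ℤ] ℤ :=
  liftAlternating (Function.update
    (fun i => (0 : (Fin n → ℤ) [⋀^Fin i]→ₗ[ℤ] ℤ)) q
    ((Matrix.detRowAlternating (n := Fin q) (R := ℤ)).compLinearMap
      (LinearMap.funLeft ℤ ℤ (fun j => U.1.orderEmbOfFin U.2 j))))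

theorem FU_wdg (U S : {s : Finset (Fin n) // s.card = q}) :
    FU n q U (wdg n q S) = if U = S then 1 else 0 := by
  rw [FU, wdg, liftAlternating_apply_ιMulti, Function.update_self]
  rw [AlternatingMap.compLinearMap_apply]
  rcases eq_or_ne U S with h | h
  · subst h
    rw [if_pos rfl]
    have h1 : (fun i => LinearMap.funLeft ℤ ℤ (fun j => U.1.orderEmbOfFin U.2 j)
        (Pi.single (U.1.orderEmbOfFin U.2 i) 1)) = fun i j => ((1 : Matrix (Fin q) (Fin q) ℤ) i j) := by
      funext i j
      simp only [LinearMap.funLeft_apply, Matrix.one_apply, Pi.single_apply]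
      by_cases hij : i = j
      · subst hij; simp
      · have hc : ¬ ((U.1.orderEmbOfFin U.2) j = (U.1.orderEmbOfFin U.2) i) :=
          fun hc => hij (((U.1.orderEmbOfFin U.2).injective hc).symm)
        rw [if_neg hc, if_neg hij]
    rw [h1]
    show Matrix.det _ = 1
    convert Matrix.det_one with i j
  · rw [if_neg h]
    -- find a column not in S
    have hne : ∃ j : Fin q, U.1.orderEmbOfFin U.2 j ∉ S.1 := by
      by_contra hall
      push_neg at hall
      have hsub : U.1 ⊆ S.1 := by
        intro x hx
        have : x ∈ Set.range (U.1.orderEmbOfFin U.2) := by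
          rw [Finset.range_orderEmbOfFin]
          exact hx
        obtain ⟨j, rfl⟩ := this
        exact hall j
      have : U.1 = S.1 := Finset.eq_of_subset_of_card_le hsub (by rw [U.2, S.2])
      exact h (Subtype.ext this)
    obtain ⟨j, hj⟩ := hne
    show Matrix.det _ = 0
    apply Matrix.det_eq_zero_of_column_eq_zero j
    intro i
    simp only [LinearMap.funLeft_apply]
    rw [Pi.single_apply, if_neg]
    intro hc
    rw [hc] at hj
    exact hj (Finset.orderEmbOfFin_mem _ _ _)

theorem wdg_linInd : LinearIndependent ℤ (wdg n q) := by
  rw [linearIndependent_iff]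
  intro l hl
  ext U
  have h0 := congrArg (FU n q U) hl
  rw [map_zero, Finsupp.linearCombination_apply, Finsupp.sum, map_sum] at h0
  have h1 : ∀ S ∈ l.support, FU n q U (l S • wdg n q S)
      = if U = S then l S else 0 := by
    intro S _
    rw [map_smul, FU_wdg, smul_eq_mul]
    split <;> simp
  rw [Finset.sum_congr rfl h1, Finset.sum_ite_eq] at h0
  by_cases hU : U ∈ l.support
  · rw [if_pos hU] at h0; exact h0
  · exact Finsupp.notMem_support_iff.1 hU

theorem single_mem_span (r : Fin q → Fin n) :
    ιMulti ℤ q (fun i => (Pi.single (r i) 1 : Fin n → ℤ))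
      ∈ Submodule.span ℤ (Set.range (wdg n q)) := by
  by_cases hr : Function.Injective r
  · set S : {s : Finset (Fin n) // s.card = q} :=
      ⟨Finset.image r Finset.univ, by
        rw [Finset.card_image_of_injective _ hr, card_univ, Fintype.card_fin]⟩ with hS
    have hmem : ∀ i, r i ∈ S.1 := fun i => Finset.mem_image_of_mem r (mem_univ i)
    let π : Fin q → Fin q := fun i => (S.1.orderIsoOfFin S.2).symm ⟨r i, hmem i⟩
    have hcomp : ∀ i, S.1.orderEmbOfFin S.2 (π i) = r i := by
      intro i
      rw [← Finset.coe_orderIsoOfFin_apply]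
      show ((S.1.orderIsoOfFin S.2) ((S.1.orderIsoOfFin S.2).symm ⟨r i, hmem i⟩) : Fin n) = r i
      rw [OrderIso.apply_symm_apply]
    have hπinj : Function.Injective π := by
      intro i j hij
      apply hr
      rw [← hcomp i, ← hcomp j, hij]
    let πe : Equiv.Perm (Fin q) :=
      Equiv.ofBijective π (Finite.injective_iff_bijective.1 hπinj)
    have hfun : (fun i => (Pi.single (r i) 1 : Fin n → ℤ))
        = (fun i => (Pi.single (S.1.orderEmbOfFin S.2 i) 1 : Fin n → ℤ)) ∘ πe := by
      funext i
      show _ = Pi.single (S.1.orderEmbOfFin S.2 (π i)) 1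
      rw [hcomp]
    rw [hfun, AlternatingMap.map_perm, Units.smul_def]
    exact Submodule.smul_mem _ _ (Submodule.subset_span ⟨S, rfl⟩)
  · obtain ⟨i, j, hij, hne⟩ := Function.not_injective_iff.1 hr
    rw [AlternatingMap.map_eq_zero_of_eq _ _ (by rw [hij]) hne]
    exact Submodule.zero_mem _

theorem wdg_span : Submodule.span ℤ (Set.range (wdg n q)) = ⋀[ℤ]^q (Fin n → ℤ) := by
  apply le_antisymm
  · rw [Submodule.span_le]
    rintro _ ⟨S, rfl⟩
    exact ιMulti_range ℤ q (Set.mem_range_self _)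
  · rw [← ιMulti_span_fixedDegree, Submodule.span_le]
    rintro _ ⟨v, rfl⟩
    have h1 : ιMulti ℤ q v
        = ιMulti ℤ q (fun i => ∑ k : Fin n, v i k • (Pi.single k 1 : Fin n → ℤ)) := by
      congr 1
      funext i
      funext j
      rw [Finset.sum_apply]
      simp [Pi.single_apply]
    have h2 := MultilinearMap.map_sum (ιMulti ℤ q (M := Fin n → ℤ)).toMultilinearMap
      (g := fun (i : Fin q) (k : Fin n) => v i k • (Pi.single k 1 : Fin n → ℤ))
    have h3 : ∀ rr : Fin q → Fin n,
        (ιMulti ℤ q (M := Fin n → ℤ)).toMultilinearMap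
          (fun i => v i (rr i) • (Pi.single (rr i) 1 : Fin n → ℤ))
        = (∏ i, v i (rr i)) • ιMulti ℤ q (fun i => (Pi.single (rr i) 1 : Fin n → ℤ)) := by
      intro rr
      exact MultilinearMap.map_smul_univ _ _ _
    rw [h1]
    show (ιMulti ℤ q (M := Fin n → ℤ)).toMultilinearMap _ ∈ _
    rw [h2, Finset.sum_congr rfl (fun rr _ => h3 rr)]
    exact Submodule.sum_mem _ fun rr _ =>
      Submodule.smul_mem _ _ (single_mem_span n q rr)

/-- the basis elements inside the exterior power -/
noncomputable def wv (S : {s : Finset (Fin n) // s.card = q}) :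
    ↥(⋀[ℤ]^q (Fin n → ℤ)) :=
  ⟨wdg n q S, ιMulti_range ℤ q (Set.mem_range_self _)⟩

noncomputable def wbasis : Module.Basis {s : Finset (Fin n) // s.card = q} ℤ ↥(⋀[ℤ]^q (Fin n → ℤ)) := by
  apply Module.Basis.mk (v := wv n q)
  · apply LinearIndependent.of_comp ((⋀[ℤ]^q (Fin n → ℤ)).subtype)
    exact wdg_linInd n q
  · rw [← Submodule.map_le_map_iff_of_injective
      (Submodule.injective_subtype (⋀[ℤ]^q (Fin n → ℤ)))]
    rw [Submodule.map_span]
    rw [← Set.range_comp]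
    have : (⋀[ℤ]^q (Fin n → ℤ)).subtype ∘ wv n q = wdg n q := rfl
    rw [this, wdg_span]
    rw [Submodule.map_top, Submodule.range_subtype]

@[simp] theorem wbasis_apply (S : {s : Finset (Fin n) // s.card = q}) :
    wbasis n q S = wv n q S := by
  rw [wbasis, Module.Basis.mk_apply]


theorem val_sub_one [NeZero n] (hn2 : 2 ≤ n) (x : Fin n) :
    ((x - 1 : Fin n) : ℕ) = if x = 0 then n - 1 else (x : ℕ) - 1 := by
  have h1v : ((1 : Fin n) : ℕ) = 1 := by
    rw [Fin.val_one']
    exact Nat.mod_eq_of_lt (by omega)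
  have hs : ((x - 1 : Fin n) : ℕ) = (n - ((1 : Fin n) : ℕ) + (x : ℕ)) % n := by
    rw [Fin.sub_def]
  rw [h1v] at hs
  rcases eq_or_ne x 0 with h | h
  · subst h
    rw [if_pos rfl, hs]
    have h0 : ((0 : Fin n) : ℕ) = 0 := rfl
    rw [h0, Nat.add_zero]
    exact Nat.mod_eq_of_lt (by omega)
  · rw [if_neg h, hs]
    have h0 : ((0 : Fin n) : ℕ) = 0 := rfl
    have hx1 : 1 ≤ (x : ℕ) := by
      by_contra hc
      exact h (Fin.ext (by rw [h0]; omega))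
    have hxn : (x : ℕ) < n := x.2
    have : n - 1 + (x : ℕ) = n + ((x : ℕ) - 1) := by omega
    rw [this, Nat.add_mod_left]
    exact Nat.mod_eq_of_lt (by omega)

/-- the shift map on q-subsets -/
def sgm [NeZero n] (S : {s : Finset (Fin n) // s.card = q}) :
    {s : Finset (Fin n) // s.card = q} :=
  ⟨S.1.map (Equiv.subRight (1 : Fin n)).toEmbedding, by rw [Finset.card_map]; exact S.2⟩

theorem mem_sgm [NeZero n] (S : {s : Finset (Fin n) // s.card = q}) (x : Fin n) :
    x ∈ (sgm n q S).1 ↔ x + 1 ∈ S.1 := by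
  rw [sgm, Finset.mem_map_equiv, Equiv.subRight_symm_apply]

theorem mem_sgm_iterate [NeZero n] (S : {s : Finset (Fin n) // s.card = q}) (j : ℕ)
    (x : Fin n) : x ∈ ((sgm n q)^[j] S).1 ↔ x + (j : Fin n) ∈ S.1 := by
  induction j generalizing x with
  | zero => simp
  | succ j ih =>
    rw [Function.iterate_succ_apply', mem_sgm, ih]
    have : x + 1 + (j : Fin n) = x + ((j : ℕ) + 1 : ℕ) := by
      push_cast
      ring
    rw [this]

theorem sgm_iterate_n [NeZero n] (S : {s : Finset (Fin n) // s.card = q}) :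
    (sgm n q)^[n] S = S := by
  apply Subtype.ext
  apply Finset.ext
  intro x
  rw [mem_sgm_iterate]
  have : ((n : ℕ) : Fin n) = 0 := by
    exact_mod_cast Fin.natCast_self n
  rw [this, add_zero]

theorem sgm_free [NeZero n] (hn : n.Prime) (hq1 : 1 ≤ q) (hq2 : q ≤ n - 1)
    (S : {s : Finset (Fin n) // s.card = q}) (k : ℕ) (hk : k < n)
    (hS : (sgm n q)^[k] S = S) : k = 0 := by
  by_contra hk0
  have hmemiff : ∀ x : Fin n, x + (k : Fin n) ∈ S.1 ↔ x ∈ S.1 := by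
    intro x
    conv_rhs => rw [← hS]
    rw [mem_sgm_iterate]
  -- the subgroup of periods
  let H : AddSubgroup (Fin n) :=
    { carrier := {g : Fin n | ∀ x : Fin n, x + g ∈ S.1 ↔ x ∈ S.1}
      zero_mem' := fun x => by rw [add_zero]
      add_mem' := by
        intro a b ha hb x
        rw [← add_assoc, hb (x + a), ha x]
      neg_mem' := by
        intro a ha x
        have := ha (x + -a)
        rw [add_assoc, neg_add_cancel, add_zero] at this
        exact this.symm }
  have hkH : (k : Fin n) ∈ H := fun x => hmemiff x
  have hkne : (k : Fin n) ≠ 0 := by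
    intro hc
    have h2 : (k : ℕ) % n = 0 := by
      have h3 := congrArg Fin.val hc
      rwa [Fin.val_natCast] at h3
    rw [Nat.mod_eq_of_lt hk] at h2
    exact hk0 h2
  have hHne : H ≠ ⊥ := by
    intro hc
    rw [hc] at hkH
    exact hkne (AddSubgroup.mem_bot.1 hkH)
  have hfin : Nat.card (Fin n) = n := by
    rw [Nat.card_eq_fintype_card, Fintype.card_fin]
  have hcard : Nat.card H ∣ n := by
    have := AddSubgroup.card_addSubgroup_dvd_card H
    rwa [hfin] at this
  have hcard1 : Nat.card H ≠ 1 := by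
    intro hc
    exact hHne (AddSubgroup.eq_bot_of_card_eq H hc)
  have hcardn : Nat.card H = n := by
    rcases (Nat.Prime.eq_one_or_self_of_dvd hn _ hcard) with h | h
    · exact absurd h hcard1
    · exact h
  have hHtop : H = ⊤ := by
    apply AddSubgroup.eq_top_of_card_eq
    rw [hcardn, hfin]
  -- S is everything
  have hq0 : 0 < q := hq1
  have hSne : S.1.Nonempty := Finset.card_pos.1 (by rw [S.2]; exact hq0)
  obtain ⟨s₀, hs₀⟩ := hSne
  have hSuniv : S.1 = Finset.univ := by
    apply Finset.eq_univ_iff_forall.2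
    intro t
    have hmem : (t - s₀ : Fin n) ∈ H := by rw [hHtop]; trivial
    have := hmem s₀
    rw [add_sub_cancel] at this
    exact this.2 hs₀
  have hcS : S.1.card = n := by
    rw [hSuniv, Finset.card_univ, Fintype.card_fin]
  rw [S.2] at hcS
  omega

theorem mulVec_single [NeZero n] (hn2 : 2 ≤ n) (C : Matrix (Fin n) (Fin n) ℤ)
    (hC : ∀ i j : Fin n, C i j =
      if (j : ℕ) = (i : ℕ) + 1 then 2
      else if (i : ℕ) = n - 1 ∧ (j : ℕ) = 0 then 1 else 0) (k : Fin n) :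
    C.mulVec (Pi.single k 1) = (if k = 0 then (1:ℤ) else 2) • Pi.single (k - 1) (1:ℤ) := by
  have hmv : ∀ i, C.mulVec (Pi.single k 1) i = C i k * 1 := fun i => by simp [Matrix.mulVec_single]
  funext i
  have hval := val_sub_one n hn2 k
  have h0 : ((0 : Fin n) : ℕ) = 0 := rfl
  have hin : (i : ℕ) < n := i.2
  have hkn : (k : ℕ) < n := k.2
  have e3 : (k = 0) = ((k : ℕ) = 0) := propext ⟨fun h => by rw [h, h0],
    fun h => Fin.ext (by rw [h0]; exact h)⟩
  have e4 : (i = k - 1) = ((i : ℕ) = ((k - 1 : Fin n) : ℕ)) := propext ⟨fun h => by rw [h],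
    fun h => Fin.ext h⟩
  rw [hmv i, Pi.smul_apply, Pi.single_apply, mul_one, hC i k, smul_eq_mul]
  simp only [e3, e4, hval]
  split_ifs <;> omega

theorem key_wedge [NeZero n] (hn2 : 2 ≤ n) (hq1 : 1 ≤ q)
    (C : Matrix (Fin n) (Fin n) ℤ)
    (hC : ∀ i j : Fin n, C i j =
      if (j : ℕ) = (i : ℕ) + 1 then 2
      else if (i : ℕ) = n - 1 ∧ (j : ℕ) = 0 then 1 else 0)
    (S : {s : Finset (Fin n) // s.card = q}) :
    ιMulti ℤ q (fun j => C.mulVec (Pi.single (S.1.orderEmbOfFin S.2 j) 1))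
      = ((2:ℤ)^(q-1) * (if (0 : Fin n) ∈ S.1 then (-1:ℤ)^(q-1) else 2))
          • wdg n q (sgm n q S) := by
  have h0v : ((0 : Fin n) : ℕ) = 0 := rfl
  have ha : (fun j => C.mulVec (Pi.single (S.1.orderEmbOfFin S.2 j) 1)) =
      fun j => (if S.1.orderEmbOfFin S.2 j = 0 then (1:ℤ) else 2)
        • (Pi.single (S.1.orderEmbOfFin S.2 j - 1) 1 : Fin n → ℤ) := by
    funext j
    rw [mulVec_single n hn2 C hC]
  rw [ha]
  have hb : (ιMulti ℤ q (M := Fin n → ℤ))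
      (fun j => (if S.1.orderEmbOfFin S.2 j = 0 then (1:ℤ) else 2)
        • (Pi.single (S.1.orderEmbOfFin S.2 j - 1) 1 : Fin n → ℤ))
      = (∏ j : Fin q, if S.1.orderEmbOfFin S.2 j = 0 then (1:ℤ) else 2)
        • (ιMulti ℤ q (M := Fin n → ℤ))
            (fun j => (Pi.single (S.1.orderEmbOfFin S.2 j - 1) 1 : Fin n → ℤ)) :=
    MultilinearMap.map_smul_univ (ιMulti ℤ q (M := Fin n → ℤ)).toMultilinearMap _ _
  rw [hb]
  -- the scalar product
  have hco : (∏ j : Fin q, if S.1.orderEmbOfFin S.2 j = 0 then (1:ℤ) else 2)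
      = ∏ x ∈ S.1, (if x = 0 then (1:ℤ) else 2) := by
    rw [← Finset.prod_coe_sort S.1 (fun x => if x = 0 then (1:ℤ) else 2)]
    rw [← Equiv.prod_comp (S.1.orderIsoOfFin S.2).toEquiv
      (fun x : {x // x ∈ S.1} => if (x : Fin n) = 0 then (1:ℤ) else 2)]
    apply Finset.prod_congr rfl
    intro j _
    rw [show (((S.1.orderIsoOfFin S.2).toEquiv j : {x // x ∈ S.1}) : Fin n)
      = S.1.orderEmbOfFin S.2 j from Finset.coe_orderIsoOfFin_apply _ _ _]
    all_goals simp
  have hmemS : ∀ j, S.1.orderEmbOfFin S.2 j ∈ S.1 :=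
    fun j => Finset.orderEmbOfFin_mem _ _ _
  have hmem : ∀ j, S.1.orderEmbOfFin S.2 j - 1 ∈ (sgm n q S).1 := by
    intro j
    rw [mem_sgm, sub_add_cancel]
    exact hmemS j
  have hmono_s : StrictMono (S.1.orderEmbOfFin S.2) := (S.1.orderEmbOfFin S.2).strictMono
  by_cases h0 : (0 : Fin n) ∈ S.1
  · -- rotation case
    obtain ⟨q', rfl⟩ := Nat.exists_eq_succ_of_ne_zero (show q ≠ 0 by omega)
    rw [if_pos h0, hco, ← Finset.mul_prod_erase S.1 _ h0, if_pos rfl, one_mul]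
    rw [Finset.prod_congr rfl (fun x hx => if_neg (Finset.mem_erase.1 hx).1),
      Finset.prod_const, Finset.card_erase_of_mem h0, S.2]
    -- s 0 = 0
    have hs0 : S.1.orderEmbOfFin S.2 (0 : Fin (q' + 1)) = 0 := by
      have hz := Finset.orderEmbOfFin_zero S.2 (Nat.succ_pos q')
      have hmin : S.1.min' ⟨0, h0⟩ = 0 := by
        apply le_antisymm (Finset.min'_le _ _ h0)
        exact Fin.le_def.2 (Nat.zero_le _)
      rw [show (0 : Fin (q' + 1)) = ⟨0, Nat.succ_pos q'⟩ from rfl, hz]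
      exact hmin
    have hspos : ∀ j : Fin (q' + 1), j ≠ 0 → 1 ≤ ((S.1.orderEmbOfFin S.2 j : Fin n) : ℕ) := by
      intro j hj
      have h0q : ((0 : Fin (q' + 1)) : ℕ) = 0 := rfl
      have hjv : (j : ℕ) ≠ 0 := fun hc => hj (Fin.ext (by rw [h0q, hc]))
      have hlt : S.1.orderEmbOfFin S.2 0 < S.1.orderEmbOfFin S.2 j :=
        hmono_s (Fin.lt_def.2 (by rw [h0q]; omega))
      rw [hs0] at hlt
      have h9 := Fin.lt_def.1 hlt
      rw [h0v] at h9
      omega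
    have hvallt : ∀ j : Fin (q' + 1), ((S.1.orderEmbOfFin S.2 j : Fin n) : ℕ) < n :=
      fun j => (S.1.orderEmbOfFin S.2 j).2
    -- strict mono of g ∘ finRotate
    have hrot : StrictMono ((fun j => S.1.orderEmbOfFin S.2 j - 1) ∘ finRotate (q' + 1)) := by
      intro a b hab
      have haval : (a : ℕ) < (b : ℕ) := Fin.lt_def.1 hab
      have hbval : (b : ℕ) < q' + 1 := b.2
      have hanl : a ≠ Fin.last q' := by
        intro hc
        rw [hc] at haval
        simp only [Fin.val_last] at haval
        omega
      show (S.1.orderEmbOfFin S.2 (finRotate (q' + 1) a) - 1)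
        < (S.1.orderEmbOfFin S.2 (finRotate (q' + 1) b) - 1)
      rw [finRotate_succ_apply, finRotate_succ_apply]
      have hva : ((a + 1 : Fin (q' + 1)) : ℕ) = (a : ℕ) + 1 := by
        rw [Fin.val_add_one, if_neg hanl]
      have ha1ne : (a + 1 : Fin (q' + 1)) ≠ 0 := by
        intro hc
        have := congrArg Fin.val hc
        rw [hva] at this
        simp at this
      have hsa1 : (S.1.orderEmbOfFin S.2 (a + 1)) ≠ 0 := by
        intro hc
        have := hspos (a + 1) ha1ne
        rw [hc, h0v] at this
        omega
      by_cases hbl : b = Fin.last q'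
      · -- b + 1 = 0, value is s 0 - 1 = 0 - 1 with val n - 1
        rw [hbl, Fin.last_add_one, hs0]
        rw [Fin.lt_def, val_sub_one n hn2 _, val_sub_one n hn2 _,
          if_neg hsa1, if_pos rfl]
        have := hspos (a + 1) ha1ne
        have := hvallt (a + 1)
        omega
      · have hvb : ((b + 1 : Fin (q' + 1)) : ℕ) = (b : ℕ) + 1 := by
          rw [Fin.val_add_one, if_neg hbl]
        have hb1ne : (b + 1 : Fin (q' + 1)) ≠ 0 := by
          intro hc
          have := congrArg Fin.val hc
          rw [hvb] at this
          simp at this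
        have hsb1 : (S.1.orderEmbOfFin S.2 (b + 1)) ≠ 0 := by
          intro hc
          have := hspos (b + 1) hb1ne
          rw [hc, h0v] at this
          omega
        have hlt : S.1.orderEmbOfFin S.2 (a + 1) < S.1.orderEmbOfFin S.2 (b + 1) := by
          apply hmono_s
          rw [Fin.lt_def, hva, hvb]
          omega
        rw [Fin.lt_def, val_sub_one n hn2 _, val_sub_one n hn2 _,
          if_neg hsa1, if_neg hsb1]
        have h10 := Fin.lt_def.1 hlt
        have := hspos (a + 1) ha1ne
        omega
    -- identify the rotated family with the enumeration of sgm S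
    have hfun : ((fun j => S.1.orderEmbOfFin S.2 j - 1) ∘ finRotate (q' + 1))
        = ⇑((sgm n (q'+1) S).1.orderEmbOfFin (sgm n (q'+1) S).2) :=
      Finset.orderEmbOfFin_unique _ (fun x => hmem _) hrot
    have hperm := AlternatingMap.map_perm (ιMulti ℤ (q'+1) (M := Fin n → ℤ))
        (fun j => (Pi.single (S.1.orderEmbOfFin S.2 j - 1) 1 : Fin n → ℤ)) (finRotate (q'+1))
    have hwdg : wdg n (q'+1) (sgm n (q'+1) S)
        = Equiv.Perm.sign (finRotate (q'+1)) •
          ιMulti ℤ (q'+1) (fun j => (Pi.single (S.1.orderEmbOfFin S.2 j - 1) 1 : Fin n → ℤ)) := by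
      rw [show wdg n (q'+1) (sgm n (q'+1) S) = ιMulti ℤ (q'+1)
        (fun i => (Pi.single ((sgm n (q'+1) S).1.orderEmbOfFin (sgm n (q'+1) S).2 i) 1 : Fin n → ℤ)) from rfl]
      rw [← hperm]
      congr 1
      funext i
      exact congrArg (fun z => (Pi.single z 1 : Fin n → ℤ)) (congrFun hfun i).symm
    rw [hwdg, sign_finRotate, Units.smul_def]
    rw [show ((((-1 : ℤˣ) ^ (q' + 1 - 1)) : ℤˣ) : ℤ) = (-1 : ℤ)^q' by simp]
    rw [smul_smul]
    simp only [Nat.succ_sub_one]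
    congr 1
    rw [mul_assoc, ← pow_add]
    rw [Even.neg_one_pow (⟨q', rfl⟩ : Even (q' + q'))]
    ring
  · -- monotone case
    rw [if_neg h0, hco]
    rw [Finset.prod_congr rfl (fun x hx => if_neg (fun hc => h0 (by rw [hc] at hx; exact hx))),
      Finset.prod_const, S.2]
    have hne0 : ∀ j, S.1.orderEmbOfFin S.2 j ≠ 0 := fun j hc => h0 (hc ▸ hmemS j)
    have hval1 : ∀ j, 1 ≤ ((S.1.orderEmbOfFin S.2 j : Fin n) : ℕ) := by
      intro j
      by_contra hc
      exact hne0 j (Fin.ext (by rw [h0v]; omega))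
    have hmono : StrictMono (fun j => S.1.orderEmbOfFin S.2 j - 1) := by
      intro a b hab
      rw [Fin.lt_def, val_sub_one n hn2 _, val_sub_one n hn2 _,
        if_neg (hne0 a), if_neg (hne0 b)]
      have := Fin.lt_def.1 (hmono_s hab)
      have := hval1 a
      have := hval1 b
      omega
    have hfun : (fun j => S.1.orderEmbOfFin S.2 j - 1)
        = ⇑((sgm n q S).1.orderEmbOfFin (sgm n q S).2) :=
      Finset.orderEmbOfFin_unique _ hmem hmono
    have hwdg_def : wdg n q (sgm n q S) = ιMulti ℤ q
        (fun i => (Pi.single ((sgm n q S).1.orderEmbOfFin (sgm n q S).2 i) 1 : Fin n → ℤ)) := rfl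
    rw [hwdg_def, show (fun i => (Pi.single ((sgm n q S).1.orderEmbOfFin (sgm n q S).2 i) 1 : Fin n → ℤ))
      = fun i => (Pi.single (S.1.orderEmbOfFin S.2 i - 1) 1 : Fin n → ℤ) from
        funext fun i => congrArg (fun z => (Pi.single z 1 : Fin n → ℤ)) (congrFun hfun i).symm]
    rw [← pow_succ]
    congr 2
    omega

end Stmt11Aux


section CokerCyclic

variable {ι : Type} [Fintype ι] [DecidableEq ι] (nn NN : ℕ)
  (e : ι → ι) (c : ι → ℤ)

theorem coker_cyclic (hnn : 0 < nn) [NeZero NN]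
    (he : ∀ S, e^[nn] S = S)
    (hfree : ∀ S k, k < nn → e^[k] S = S → k = 0)
    (hprodZ : ∀ S, (∏ j ∈ Finset.range nn, c (e^[j] S)) = (NN : ℤ) + 1)
    (T : (ι → ℤ) →ₗ[ℤ] (ι → ℤ))
    (hT : ∀ S, T (Pi.single S 1) = c S • Pi.single (e S) 1) :
    Nonempty (((ι → ℤ) ⧸ LinearMap.range (LinearMap.id - T)) ≃+
      (Fin (Fintype.card ι / nn) → ZMod NN)) := by
  classical
  -- iterate basics
  have hmul : ∀ (b : ℕ) (S : ι), e^[nn * b] S = S := by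
    intro b
    induction b with
    | zero => simp
    | succ b ih =>
      intro S
      rw [Nat.mul_succ, Function.iterate_add_apply, ih, he]
  have hmod : ∀ (j : ℕ) (S : ι), e^[j] S = e^[j % nn] S := by
    intro j S
    conv_lhs => rw [← Nat.div_add_mod j nn, Function.iterate_add_apply, hmul]
  have hinj : ∀ (S : ι) (a b : ℕ), a < nn → b < nn → e^[a] S = e^[b] S → a = b := by
    have heinj : Function.Injective e := by
      have h : Function.LeftInverse e^[nn - 1] e := by
        intro x
        have h1 := he x
        rw [show nn = (nn - 1) + 1 by omega, Function.iterate_add_apply] at h1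
        simpa using h1
      exact h.injective
    intro S a b ha hb hab
    rcases le_total a b with h | h
    · rw [show b = a + (b - a) by omega, Function.iterate_add_apply] at hab
      have h2 := (Function.Injective.iterate heinj a) hab
      have := hfree S (b - a) (by omega) h2.symm
      omega
    · rw [show a = b + (a - b) by omega, Function.iterate_add_apply] at hab
      have h2 := (Function.Injective.iterate heinj b) hab.symm
      have := hfree S (a - b) (by omega) h2.symm
      omega
  -- orbit setoid
  let r : ι → ι → Prop := fun S S' => ∃ j, e^[j] S = S'
  have hr_symm : ∀ {S S'}, r S S' → r S' S := by
    rintro S S' ⟨j, rfl⟩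
    refine ⟨nn - j % nn, ?_⟩
    rw [← Function.iterate_add_apply]
    have hlt : j % nn < nn := Nat.mod_lt _ hnn
    have hdm := Nat.div_add_mod j nn
    have h4 : (nn - j % nn + j) = nn * (1 + j / nn) := by
      rw [Nat.mul_add, Nat.mul_one]; omega
    rw [h4, hmul]
  have hr_trans : ∀ {S S' S''}, r S S' → r S' S'' → r S S'' := by
    rintro S S' S'' ⟨j, rfl⟩ ⟨k, rfl⟩
    exact ⟨k + j, Function.iterate_add_apply e k j S⟩
  let st : Setoid ι := ⟨r, ⟨fun S => ⟨0, rfl⟩, hr_symm, hr_trans⟩⟩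
  let O := Quotient st
  let mk : ι → O := Quotient.mk st
  have hmk_e : ∀ (j : ℕ) (S : ι), mk (e^[j] S) = mk S :=
    fun j S => (Quotient.sound (show r S (e^[j] S) from ⟨j, rfl⟩)).symm
  let rep : O → ι := Quotient.out
  have hrep : ∀ o : O, mk (rep o) = o := fun o => Quotient.out_eq o
  have hex : ∀ S : ι, ∃ k, k < nn ∧ e^[k] S = rep (mk S) := by
    intro S
    have h : mk S = mk (rep (mk S)) := (hrep (mk S)).symm
    obtain ⟨j, hj⟩ : ∃ j, e^[j] S = rep (mk S) := Quotient.exact h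
    exact ⟨j % nn, Nat.mod_lt _ hnn, by rw [← hmod]; exact hj⟩
  -- the K function and products along orbits
  let K : ι → ℕ := fun S => (hex S).choose
  have hK1 : ∀ S, K S < nn := fun S => (hex S).choose_spec.1
  have hK2 : ∀ S, e^[K S] S = rep (mk S) := fun S => (hex S).choose_spec.2
  let Dk : ι → ℕ → ℤ := fun S k => ∏ j ∈ Finset.range k, c (e^[j] S)
  have Dk_succ : ∀ S k, Dk S (k + 1) = Dk S k * c (e^[k] S) := by
    intro S k
    exact Finset.prod_range_succ _ _
  have Dk_succ' : ∀ S k, Dk S (k + 1) = c S * Dk (e S) k := by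
    intro S k
    show (∏ j ∈ Finset.range (k+1), c (e^[j] S)) = _
    rw [Finset.prod_range_succ']
    have hc : ∀ j : ℕ, c (e^[j + 1] S) = c (e^[j] (e S)) := fun j => by
      rw [Function.iterate_succ_apply]
    simp only [hc, Function.iterate_zero_apply]
    exact mul_comm _ _
  let D : ι → ℤ := fun S => Dk S (K S)
  let d : ι → ZMod NN := fun S => ((D S : ℤ) : ZMod NN)
  have hK_rep : ∀ o : O, K (rep o) = 0 := by
    intro o
    have h1 := hK2 (rep o)
    rw [hrep o] at h1
    exact hfree _ _ (hK1 _) h1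
  have hd_rep : ∀ o : O, d (rep o) = 1 := by
    intro o
    show ((Dk (rep o) (K (rep o)) : ℤ) : ZMod NN) = 1
    rw [hK_rep o]
    simp [Dk]
  have hmk_eS : ∀ S, mk (e S) = mk S := fun S => hmk_e 1 S
  have hDknn : ∀ S, ((Dk S nn : ℤ) : ZMod NN) = 1 := by
    intro S
    show (((∏ j ∈ Finset.range nn, c (e^[j] S)) : ℤ) : ZMod NN) = 1
    rw [hprodZ S]
    push_cast
    rw [ZMod.natCast_self]
    ring
  -- key relation d S = c S * d (e S)
  have hd : ∀ S, d S = ((c S : ℤ) : ZMod NN) * d (e S) := by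
    intro S
    have hrepeq : rep (mk (e S)) = rep (mk S) := by rw [hmk_eS]
    have h1 : e^[K (e S) + 1] S = rep (mk S) := by
      rw [Function.iterate_add_apply]
      simpa using (hrepeq ▸ hK2 (e S))
    rcases Nat.lt_or_ge (K (e S) + 1) nn with hlt | hge
    · have : K S = K (e S) + 1 := hinj S _ _ (hK1 S) hlt (by rw [hK2 S, h1])
      show ((Dk S (K S) : ℤ) : ZMod NN) = _
      rw [this, Dk_succ']
      push_cast
      rfl
    · -- K (e S) = nn - 1 ; then rep (mk S) = S and K S = 0
      have hKe : K (e S) + 1 = nn := by have := hK1 (e S); omega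
      have hSrep : rep (mk S) = S := by
        rw [← h1, hKe, he]
      have hKS : K S = 0 := hfree S _ (hK1 S) (by rw [hK2 S, hSrep])
      have hdS : d S = 1 := by
        show ((Dk S (K S) : ℤ) : ZMod NN) = 1
        rw [hKS]; simp [Dk]
      rw [hdS]
      have h2 : ((Dk S nn : ℤ) : ZMod NN) = ((c S : ℤ) : ZMod NN) * d (e S) := by
        rw [← hKe, Dk_succ']
        show (((c S * Dk (e S) (K (e S))) : ℤ) : ZMod NN) = _
        push_cast
        rfl
      rw [← h2, hDknn]
  -- the linear map φ
  let V := O → ZMod NN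
  let u : ι → V := fun S => Pi.single (mk S) (d S)
  let φ : (ι → ℤ) →ₗ[ℤ] V :=
    ∑ S : ι, (LinearMap.toSpanSingleton ℤ V (u S)).comp (LinearMap.proj S)
  have hus : ∀ S : ι, u S = (Pi.single (mk S) (d S) : V) := fun _ => rfl
  have φ_apply : ∀ x, φ x = ∑ S : ι, x S • u S := by
    intro x
    simp [φ, LinearMap.sum_apply, LinearMap.toSpanSingleton_apply]
  have φ_single : ∀ (S : ι) (a : ℤ), φ (Pi.single S a) = a • u S := by
    intro S a
    rw [φ_apply, Finset.sum_eq_single S]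
    · rw [Pi.single_eq_same]
    · intro U _ hU
      rw [Pi.single_eq_of_ne hU, zero_smul]
    · intro h
      exact absurd (Finset.mem_univ S) h
  -- basic decomposition of x
  have hx_decomp : ∀ x : ι → ℤ, x = ∑ S : ι, x S • Pi.single S (1:ℤ) := by
    intro x
    funext j
    rw [Finset.sum_apply]
    simp [Pi.single_apply]
  -- telescoping membership
  have hrange_single : ∀ (S : ι) (k : ℕ),
      Pi.single S (1:ℤ) - Dk S k • Pi.single (e^[k] S) 1
        ∈ LinearMap.range (LinearMap.id - T) := by
    intro S k
    induction k with
    | zero => simp [Dk]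
    | succ k ih =>
      have hmem : (LinearMap.id - T : (ι → ℤ) →ₗ[ℤ] (ι → ℤ)) (Pi.single (e^[k] S) (1:ℤ))
          ∈ LinearMap.range (LinearMap.id - T) := LinearMap.mem_range_self _ _
      have h3 : (LinearMap.id - T : (ι → ℤ) →ₗ[ℤ] (ι → ℤ)) (Pi.single (e^[k] S) (1:ℤ))
          = Pi.single (e^[k] S) 1 - c (e^[k] S) • Pi.single (e^[k+1] S) 1 := by
        rw [LinearMap.sub_apply, LinearMap.id_apply, hT, Function.iterate_succ_apply']
      have heq : Pi.single S (1:ℤ) - Dk S (k+1) • Pi.single (e^[k+1] S) 1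
          = (Pi.single S 1 - Dk S k • Pi.single (e^[k] S) 1)
            + Dk S k • ((LinearMap.id - T : (ι → ℤ) →ₗ[ℤ] (ι → ℤ)) (Pi.single (e^[k] S) 1)) := by
        rw [h3, Dk_succ]
        module
      rw [heq]
      exact add_mem ih (Submodule.smul_mem _ _ hmem)
  have hNsingle : ∀ S : ι, ((NN : ℤ)) • Pi.single S (1:ℤ)
      ∈ LinearMap.range (LinearMap.id - T) := by
    intro S
    have h1 := hrange_single S nn
    rw [he S] at h1
    have h2 : Pi.single S (1:ℤ) - Dk S nn • (Pi.single S 1 : ι → ℤ)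
        = -(((NN : ℤ)) • (Pi.single S 1 : ι → ℤ)) := by
      rw [show Dk S nn = (NN : ℤ) + 1 from hprodZ S]
      module
    rw [h2] at h1
    exact (neg_mem_iff).1 h1
  -- u relation
  have hu : ∀ S : ι, u S = (c S) • u (e S) := by
    intro S
    rw [hus, hus, hmk_eS, ← Pi.single_smul]
    congr 1
    rw [hd S, zsmul_eq_mul]
  -- ker φ = range (id - T)
  have hker : LinearMap.ker φ = LinearMap.range (LinearMap.id - T) := by
    apply le_antisymm
    · intro x hx
      rw [LinearMap.mem_ker, φ_apply] at hx
      set y := ∑ S : ι, x S • (Pi.single S (1:ℤ) - D S • (Pi.single (rep (mk S)) 1 : ι → ℤ)) with hy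
      have hymem : y ∈ LinearMap.range (LinearMap.id - T) := by
        apply Submodule.sum_mem
        intro S _
        apply Submodule.smul_mem
        have h5 := hrange_single S (K S)
        rwa [hK2 S] at h5
      let a : O → ℤ := fun o => ∑ S ∈ Finset.univ.filter (fun S => mk S = o), x S * D S
      have hxy0 : x = y + ∑ S : ι, (x S * D S) • (Pi.single (rep (mk S)) 1 : ι → ℤ) := by
        rw [hy, ← Finset.sum_add_distrib]
        conv_lhs => rw [hx_decomp x]
        apply Finset.sum_congr rfl
        intro S _
        rw [mul_smul]
        module
      have hxy : x - y = ∑ o : O, a o • Pi.single (rep o) (1:ℤ) := by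
        calc x - y = ∑ S : ι, (x S * D S) • (Pi.single (rep (mk S)) 1 : ι → ℤ) := by
              rw [sub_eq_iff_eq_add']
              exact hxy0
          _ = ∑ o : O, ∑ S ∈ Finset.univ.filter (fun S => mk S = o),
                (x S * D S) • Pi.single (rep (mk S)) (1:ℤ) :=
              (Finset.sum_fiberwise _ _ _).symm
          _ = ∑ o : O, a o • Pi.single (rep o) (1:ℤ) := by
              apply Finset.sum_congr rfl
              intro o _
              rw [Finset.sum_smul]
              apply Finset.sum_congr rfl
              intro S hS
              rw [(Finset.mem_filter.1 hS).2]
      have ha : ∀ o : O, ((a o : ℤ) : ZMod NN) = 0 := by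
        intro o
        have h0 : (∑ S : ι, x S • u S) o = 0 := by rw [hx]; rfl
        rw [Finset.sum_apply] at h0
        have h6 : ∀ S : ι, (x S • u S) o
            = (if mk S = o then ((x S * D S : ℤ) : ZMod NN) else 0) := by
          intro S
          rw [Pi.smul_apply, hus S]
          rcases eq_or_ne (mk S) o with h | h
          · subst h
            rw [Pi.single_eq_same, if_pos rfl, zsmul_eq_mul]
            push_cast
            rfl
          · rw [Pi.single_eq_of_ne (Ne.symm h), if_neg h, smul_zero]
        rw [Finset.sum_congr rfl (fun S _ => h6 S)] at h0
        rw [← Finset.sum_filter] at h0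
        rw [← h0]
        push_cast [a]
        rfl
      have hx_mem : x - y ∈ LinearMap.range (LinearMap.id - T) := by
        rw [hxy]
        apply Submodule.sum_mem
        intro o _
        obtain ⟨z, hz⟩ := (ZMod.intCast_zmod_eq_zero_iff_dvd _ _).1 (ha o)
        rw [hz, mul_comm, mul_smul]
        exact Submodule.smul_mem _ _ (hNsingle _)
      have := add_mem hymem hx_mem
      rwa [add_sub_cancel] at this
    · rintro _ ⟨x, rfl⟩
      rw [LinearMap.mem_ker]
      conv_lhs => rw [hx_decomp x, map_sum, map_sum]
      apply Finset.sum_eq_zero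
      intro S _
      rw [map_smul, map_smul, LinearMap.sub_apply, LinearMap.id_apply, hT, map_sub,
        φ_single, map_smul, φ_single, one_smul, one_smul, ← hu, sub_self, smul_zero]
  -- surjectivity
  have hsurj : Function.Surjective φ := by
    intro f
    refine ⟨∑ o : O, ((f o).val : ℤ) • Pi.single (rep o) 1, ?_⟩
    rw [map_sum]
    have h7 : ∀ o : O, φ (((f o).val : ℤ) • Pi.single (rep o) 1)
        = Pi.single o (f o) := by
      intro o
      rw [map_smul, φ_single, one_smul, hus, hrep, hd_rep, ← Pi.single_smul]
      congr 1
      rw [zsmul_eq_mul, mul_one]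
      push_cast
      exact ZMod.natCast_rightInverse (f o)
    rw [Finset.sum_congr rfl (fun o _ => h7 o)]
    exact Finset.univ_sum_single f
  -- cardinality
  have hcard : Fintype.card ι = Fintype.card O * nn := by
    rw [← Fintype.card_congr (Equiv.sigmaFiberEquiv mk)]
    rw [Fintype.card_sigma]
    have h8 : ∀ o : O, Fintype.card {S : ι // mk S = o} = nn := by
      intro o
      have hbij : Function.Bijective
          (fun j : Fin nn => (⟨e^[(j : ℕ)] (rep o), by rw [hmk_e, hrep]⟩ : {S : ι // mk S = o})) := by
        constructor
        · intro j k hjk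
          have := hinj (rep o) j k j.2 k.2 (congrArg Subtype.val hjk)
          exact Fin.ext this
        · rintro ⟨S, hS⟩
          have hKS := hK2 S
          rw [hS] at hKS
          refine ⟨⟨(nn - K S) % nn, Nat.mod_lt _ hnn⟩, ?_⟩
          apply Subtype.ext
          show e^[(nn - K S) % nn] (rep o) = S
          rw [← hmod, ← hKS, ← Function.iterate_add_apply,
            show nn - K S + K S = nn by have := hK1 S; omega, he]
      rw [← Fintype.card_fin nn]
      exact (Fintype.card_of_bijective hbij).symm
    rw [Finset.sum_congr rfl (fun o _ => h8 o), Finset.sum_const, Finset.card_univ,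
      smul_eq_mul]
  have hm : Fintype.card O = Fintype.card ι / nn := by
    rw [hcard]
    exact (Nat.mul_div_cancel _ hnn).symm
  -- assemble
  let e1 : ((ι → ℤ) ⧸ LinearMap.range (LinearMap.id - T)) ≃ₗ[ℤ] V :=
    (Submodule.quotEquivOfEq _ _ hker.symm).trans (φ.quotKerEquivOfSurjective hsurj)
  let eO : O ≃ Fin (Fintype.card ι / nn) := Fintype.equivFinOfCardEq hm
  refine ⟨e1.toAddEquiv.trans ?_⟩
  exact { Equiv.piCongrLeft' (fun _ => ZMod NN) eO with map_add' := fun x y => rfl }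

end CokerCyclic


open Stmt11Aux ExteriorAlgebra in
/-- For `n ≥ 2` prime and the `n × n` rational matrix `A` with `A_{i,i+1} = 1`,
`A_{n,1} = 1/2` (encoded via the integer matrix `C = 2A`), and `1 ≤ q ≤ n - 1`,
the cokernel of `I - 2Λ^q(A)` on `Λ^q(ℤⁿ)` is `(ℤ/(2^{n-q}-1)ℤ)^{C(n,q)/n}`.
The map `T = 2Λ^q(A)` is characterized by `2^{q-1} T = Λ^q(C)` on wedges. -/
theorem stmt_11 (n q : ℕ) (hn : n.Prime) (hq1 : 1 ≤ q) (hq2 : q ≤ n - 1)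
    (C : Matrix (Fin n) (Fin n) ℤ)
    (hC : ∀ i j : Fin n, C i j =
      if (j : ℕ) = (i : ℕ) + 1 then 2
      else if (i : ℕ) = n - 1 ∧ (j : ℕ) = 0 then 1 else 0)
    (T : ↥(⋀[ℤ]^q (Fin n → ℤ)) →ₗ[ℤ] ↥(⋀[ℤ]^q (Fin n → ℤ)))
    (hT : ∀ v : Fin q → (Fin n → ℤ),
      (2 : ℤ) ^ (q - 1) • ((⋀[ℤ]^q (Fin n → ℤ)).subtype
          (T ⟨ExteriorAlgebra.ιMulti ℤ q v, ExteriorAlgebra.ιMulti_range ℤ q (Set.mem_range_self _)⟩))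
        = ExteriorAlgebra.ιMulti ℤ q (fun j => C.mulVec (v j))) :
    Nonempty ((↥(⋀[ℤ]^q (Fin n → ℤ)) ⧸ LinearMap.range (LinearMap.id - T))
        ≃+ (Fin (n.choose q / n) → ZMod (2 ^ (n - q) - 1))) := by
  classical
  haveI : NeZero n := ⟨hn.pos.ne'⟩
  have hn2 : 2 ≤ n := hn.two_le
  have hnq1 : 1 ≤ n - q := by omega
  have hpow2 : 2 ≤ 2 ^ (n - q) := by
    calc (2:ℕ) = 2 ^ 1 := rfl
    _ ≤ 2 ^ (n - q) := Nat.pow_le_pow_right (by norm_num) hnq1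
  haveI : NeZero (2 ^ (n - q) - 1) := ⟨by omega⟩
  let b := wbasis n q
  -- T on the basis
  have hTb : ∀ S : {s : Finset (Fin n) // s.card = q},
      T (wv n q S) = (if (0 : Fin n) ∈ S.1 then (-1:ℤ)^(q-1) else 2) • wv n q (sgm n q S) := by
    intro S
    have h1 := hT (fun i => Pi.single (S.1.orderEmbOfFin S.2 i) 1)
    rw [key_wedge n q hn2 hq1 C hC S] at h1
    have harg : (⟨ιMulti ℤ q (fun i => Pi.single (S.1.orderEmbOfFin S.2 i) 1),
        ιMulti_range ℤ q (Set.mem_range_self _)⟩ : ↥(⋀[ℤ]^q (Fin n → ℤ))) = wv n q S :=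
      Subtype.ext rfl
    rw [harg] at h1
    have h4 : ((⋀[ℤ]^q (Fin n → ℤ)).subtype) ((2:ℤ)^(q-1) • T (wv n q S))
        = ((⋀[ℤ]^q (Fin n → ℤ)).subtype) ((2:ℤ)^(q-1) •
            ((if (0 : Fin n) ∈ S.1 then (-1:ℤ)^(q-1) else 2) • wv n q (sgm n q S))) := by
      rw [map_smul, map_smul, map_smul, h1, smul_smul]
      rfl
    have h5 := Submodule.injective_subtype _ h4
    have h6 := congrArg b.repr h5
    rw [map_smul, map_smul] at h6
    apply b.repr.injective
    ext a
    have h7 := congrArg (fun f => f a) h6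
    simp only [Finsupp.smul_apply, smul_eq_mul] at h7
    exact mul_left_cancel₀ (pow_ne_zero _ (two_ne_zero)) h7
  -- transport through the basis
  let E := b.equivFun
  let T' : ({s : Finset (Fin n) // s.card = q} → ℤ) →ₗ[ℤ]
      ({s : Finset (Fin n) // s.card = q} → ℤ) :=
    (E.toLinearMap.comp T).comp E.symm.toLinearMap
  have hEwv : ∀ U, E (wv n q U) = Pi.single U 1 := by
    intro U
    rw [← wbasis_apply]
    show b.equivFun (b U) = _
    funext j
    rw [Module.Basis.equivFun_self, Pi.single_apply]
    exact if_congr eq_comm rfl rfl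
  have hEsymm : ∀ S, E.symm (Pi.single S 1) = wv n q S := by
    intro S
    apply E.injective
    rw [LinearEquiv.apply_symm_apply, hEwv]
  have hT'single : ∀ S, T' (Pi.single S 1)
      = (if (0 : Fin n) ∈ S.1 then (-1:ℤ)^(q-1) else 2) • Pi.single (sgm n q S) 1 := by
    intro S
    show E (T (E.symm (Pi.single S 1))) = _
    rw [hEsymm, hTb, map_smul, hEwv]
  -- the quotient equivalence
  have hcomp : (LinearMap.id - T').comp E.toLinearMap
      = E.toLinearMap.comp (LinearMap.id - T) := by
    apply LinearMap.ext
    intro x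
    show E x - T' (E x) = E (x - T x)
    rw [show E (x - T x) = E x - E (T x) from E.toLinearMap.map_sub x (T x)]
    congr 1
    show E (T (E.symm (E x))) = E (T x)
    rw [LinearEquiv.symm_apply_apply]
  have hmap : Submodule.map (E : ↥(⋀[ℤ]^q (Fin n → ℤ)) ≃ₗ[ℤ] _).toLinearMap
      (LinearMap.range (LinearMap.id - T)) = LinearMap.range (LinearMap.id - T') := by
    calc Submodule.map E.toLinearMap (LinearMap.range (LinearMap.id - T))
        = LinearMap.range (E.toLinearMap.comp (LinearMap.id - T)) :=
          (LinearMap.range_comp _ _).symm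
      _ = LinearMap.range ((LinearMap.id - T').comp E.toLinearMap) := by rw [hcomp]
      _ = LinearMap.range (LinearMap.id - T') := by
          rw [LinearMap.range_comp, LinearEquiv.range, Submodule.map_top]
  let eq1 := Submodule.Quotient.equiv _ _ E hmap
  -- orbit product
  have hprodZ : ∀ S : {s : Finset (Fin n) // s.card = q},
      (∏ j ∈ Finset.range n,
        (fun S' : {s : Finset (Fin n) // s.card = q} =>
          if (0 : Fin n) ∈ S'.1 then (-1:ℤ)^(q-1) else 2) ((sgm n q)^[j] S))
        = ((2 ^ (n - q) - 1 : ℕ) : ℤ) + 1 := by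
    intro S
    show (∏ j ∈ Finset.range n,
        (if (0 : Fin n) ∈ ((sgm n q)^[j] S).1 then (-1:ℤ)^(q-1) else 2)) = _
    have hmem0 : ∀ j : ℕ, ((0 : Fin n) ∈ ((sgm n q)^[j] S).1) ↔ (((j : ℕ) : Fin n) ∈ S.1) := by
      intro j
      rw [mem_sgm_iterate, zero_add]
    have h1 : (∏ j ∈ Finset.range n,
        (if (0 : Fin n) ∈ ((sgm n q)^[j] S).1 then (-1:ℤ)^(q-1) else 2))
        = ∏ j ∈ Finset.range n, (if ((j : ℕ) : Fin n) ∈ S.1 then (-1:ℤ)^(q-1) else 2) := by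
      apply Finset.prod_congr rfl
      intro j _
      exact if_congr (hmem0 j) rfl rfl
    have h2 : (∏ j ∈ Finset.range n, (if ((j : ℕ) : Fin n) ∈ S.1 then (-1:ℤ)^(q-1) else 2))
        = ∏ x : Fin n, (if x ∈ S.1 then (-1:ℤ)^(q-1) else 2) := by
      rw [← Fin.prod_univ_eq_prod_range
        (fun j : ℕ => if ((j : ℕ) : Fin n) ∈ S.1 then (-1:ℤ)^(q-1) else 2) n]
      apply Finset.prod_congr rfl
      intro x _
      rw [Fin.cast_val_eq_self]
    have h3 : (∏ x : Fin n, (if x ∈ S.1 then (-1:ℤ)^(q-1) else 2))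
        = ((-1:ℤ)^(q-1))^q * 2^(n-q) := by
      rw [← Finset.prod_mul_prod_compl S.1]
      congr 1
      · rw [Finset.prod_congr rfl (fun x hx => if_pos hx), Finset.prod_const, S.2]
      · rw [Finset.prod_congr rfl (fun x hx => if_neg (Finset.mem_compl.1 hx)),
          Finset.prod_const, Finset.card_compl, S.2, Fintype.card_fin]
    have h4 : ((-1:ℤ)^(q-1))^q = 1 := by
      rw [← pow_mul]
      apply Even.neg_one_pow
      have he : (q - 1) * q = (q - 1) * ((q - 1) + 1) := by
        rw [Nat.sub_add_cancel hq1]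
      rw [he]
      exact Nat.even_mul_succ_self (q - 1)
    have h5 : ((2 ^ (n - q) - 1 : ℕ) : ℤ) + 1 = 2 ^ (n - q) := by
      have hle : (1:ℕ) ≤ 2 ^ (n - q) := by omega
      rw [Nat.cast_sub hle]
      push_cast
      ring
    rw [h1, h2, h3, h4, one_mul, h5]
  obtain ⟨eq2⟩ := coker_cyclic n (2 ^ (n - q) - 1) (sgm n q)
    (fun S' => if (0 : Fin n) ∈ S'.1 then (-1:ℤ)^(q-1) else 2)
    hn.pos (sgm_iterate_n n q) (sgm_free n q hn hq1 hq2) hprodZ T' hT'single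
  have hcards : Fintype.card {s : Finset (Fin n) // s.card = q} = n.choose q := by
    rw [Fintype.card_finset_len, Fintype.card_fin]
  have hdiv : Fintype.card {s : Finset (Fin n) // s.card = q} / n = n.choose q / n := by
    rw [hcards]
  have eq3 : (Fin (Fintype.card {s : Finset (Fin n) // s.card = q} / n) → ZMod (2 ^ (n - q) - 1))
      ≃+ (Fin (n.choose q / n) → ZMod (2 ^ (n - q) - 1)) :=
    { Equiv.piCongrLeft' (fun _ => ZMod (2 ^ (n - q) - 1)) (finCongr hdiv) with
      map_add' := fun _ _ => rfl }
  exact ⟨(eq1.toAddEquiv.trans eq2).trans eq3⟩
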